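/- Let ℛ ⊆ ℤⁿ be a full-dimensional unimodular set and let ξ : ℤⁿ → ℤ be a surjective homomorphism whose kernel is generated (over ℝ) by elements of ℛ (i.e., ker ξ ⊗ ℝ is an ℛ-flat). Then |ξ(r)| ≤ 1 for every r ∈ ℛ, i.e., every crossing is a co-root. -/

import Mathlib

/-- The canonical embedding of the integer lattice into `ℝⁿ`. -/
def intCast {n : ℕ} (m : Fin n → ℤ) : Fin n → ℝ := fun i => (m i : ℝ)

/-- A set of integer vectors is unimodular if every subset generates a pure subgroup. -/
def Unimodular {n : ℕ} (R : Set (Fin n → ℤ)) : Prop :=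
  ∀ B ⊆ R, ∀ g : (Fin n → ℤ) ⧸ AddSubgroup.closure B, g ≠ 0 → ¬IsOfFinAddOrder g

namespace CrossingAux

variable {n : ℕ}

/-- The canonical embedding of the integer lattice into `ℚⁿ`. -/
def ratCast (m : Fin n → ℤ) : Fin n → ℚ := fun i => (m i : ℚ)

lemma ratCast_injective : Function.Injective (ratCast (n := n)) := by
  intro a b h
  funext i
  have := congrFun h i
  simpa [ratCast] using this

/-- `ratCast` as a ℤ-linear map. -/
def ratCastL : (Fin n → ℤ) →ₗ[ℤ] (Fin n → ℚ) where
  toFun := ratCast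
  map_add' a b := by funext i; simp [ratCast]
  map_smul' z a := by funext i; simp [ratCast]

lemma intCast_add (a b : Fin n → ℤ) : intCast (a + b) = intCast a + intCast b := by
  funext i; simp [intCast]

lemma intCast_zsmul (z : ℤ) (a : Fin n → ℤ) : intCast (z • a) = (z : ℝ) • intCast a := by
  funext i; simp [intCast]

lemma intCast_single (i : Fin n) : intCast (Pi.single i (1 : ℤ)) = Pi.single i (1 : ℝ) := by
  funext j
  simp [intCast, Pi.single_apply]

/-- The linear functional on ℝⁿ with rational coefficient vector `c`. -/
def coeffR (c : Fin n → ℚ) : (Fin n → ℝ) →ₗ[ℝ] ℝ where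
  toFun v := ∑ i, (c i : ℝ) * v i
  map_add' u v := by simp [mul_add, Finset.sum_add_distrib]
  map_smul' a v := by
    simp only [Pi.smul_apply, smul_eq_mul, RingHom.id_apply, Finset.mul_sum]
    exact Finset.sum_congr rfl fun i _ => by ring

lemma pi_decomp {K : Type*} [Semiring K] (v : Fin n → K) :
    v = ∑ i, v i • (Pi.single i (1 : K) : Fin n → K) := by
  funext j
  rw [Finset.sum_apply]
  simp [Pi.single_apply, Finset.sum_ite_eq', mul_comm]

lemma dual_apply (g : Module.Dual ℚ (Fin n → ℚ)) (v : Fin n → ℚ) :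
    g v = ∑ i, v i * g (Pi.single i 1) := by
  conv_lhs => rw [pi_decomp v]
  rw [map_sum]
  exact Finset.sum_congr rfl fun i _ => by rw [map_smul]; simp

lemma addHom_apply (ξ : (Fin n → ℤ) →+ ℤ) (v : Fin n → ℤ) :
    ξ v = ∑ i, v i * ξ (Pi.single i 1) := by
  conv_lhs => rw [pi_decomp v]
  rw [map_sum]
  refine Finset.sum_congr rfl fun i _ => ?_
  rw [AddMonoidHom.map_zsmul]
  simp

lemma coeffR_intCast (c : Fin n → ℚ) (m : Fin n → ℤ) :
    coeffR c (intCast m) = ((∑ i, (m i : ℚ) * c i : ℚ) : ℝ) := by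
  show (∑ i, (c i : ℝ) * ((m i : ℤ) : ℝ)) = _
  push_cast
  exact Finset.sum_congr rfl fun i _ => by ring

/-- From membership in the real span, deduce membership in the rational span. -/
lemma mem_ratSpan (S : Set (Fin n → ℤ)) (x : Fin n → ℤ)
    (hx : intCast x ∈ Submodule.span ℝ (intCast '' S)) :
    ratCast x ∈ Submodule.span ℚ (ratCast '' S) := by
  by_contra h
  set W := Submodule.span ℚ (ratCast '' S) with hW
  have hx0 : Submodule.Quotient.mk (p := W) (ratCast x) ≠ 0 := by
    simpa [Submodule.Quotient.mk_eq_zero] using h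
  have hnall : ¬ (∀ φ : Module.Dual ℚ ((Fin n → ℚ) ⧸ W),
      φ (Submodule.Quotient.mk (ratCast x)) = 0) := by
    rw [Module.forall_dual_apply_eq_zero_iff]
    exact hx0
  obtain ⟨φ, hφ⟩ := not_forall.mp hnall
  set g : Module.Dual ℚ (Fin n → ℚ) := φ.comp W.mkQ with hg
  have hgW : ∀ w ∈ W, g w = 0 := by
    intro w hw
    simp only [hg, LinearMap.comp_apply]
    rw [show W.mkQ w = 0 from (Submodule.Quotient.mk_eq_zero W).mpr hw]
    exact map_zero φ
  set c : Fin n → ℚ := fun i => g (Pi.single i 1) with hc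
  have hcoeff : ∀ m : Fin n → ℤ, coeffR c (intCast m) = ((g (ratCast m) : ℚ) : ℝ) := by
    intro m
    rw [coeffR_intCast, dual_apply g (ratCast m)]
    norm_cast
  have hker : intCast '' S ⊆ (LinearMap.ker (coeffR c) : Set (Fin n → ℝ)) := by
    rintro _ ⟨w, hwS, rfl⟩
    have h1 : g (ratCast w) = 0 :=
      hgW _ (Submodule.subset_span ⟨w, hwS, rfl⟩)
    simp only [SetLike.mem_coe, LinearMap.mem_ker]
    rw [hcoeff, h1]
    norm_num
  have hspan : Submodule.span ℝ (intCast '' S) ≤ LinearMap.ker (coeffR c) :=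
    Submodule.span_le.mpr hker
  have hx1 : coeffR c (intCast x) = 0 := hspan hx
  rw [hcoeff] at hx1
  exact hφ (by exact_mod_cast hx1)

/-- Clear denominators: rational span membership gives an integer multiple in the closure. -/
lemma exists_pos_smul_mem (S : Set (Fin n → ℤ)) (x : Fin n → ℤ)
    (hx : ratCast x ∈ Submodule.span ℚ (ratCast '' S)) :
    ∃ m : ℕ, 0 < m ∧ (m : ℤ) • x ∈ AddSubgroup.closure S := by
  classical
  obtain ⟨c, hsupp, hsum⟩ := Submodule.mem_span_set.mp hx
  set d : ℕ := ∏ v ∈ c.support, (c v).den with hd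
  have hdpos : 0 < d := Finset.prod_pos fun v _ => (c v).pos
  refine ⟨d, hdpos, ?_⟩
  set z : (Fin n → ℚ) → ℤ := fun v => (c v).num * ((d / (c v).den : ℕ) : ℤ) with hz
  have hzz : ∀ v ∈ c.support, ((z v : ℤ) : ℚ) = (d : ℚ) * c v := by
    intro v hv
    have hdvd : (c v).den ∣ d := Finset.dvd_prod_of_mem _ hv
    obtain ⟨k, hk⟩ := hdvd
    rw [hz]
    simp only
    rw [hk, Nat.mul_div_cancel_left _ (c v).pos]
    push_cast
    rw [show ((c v).num : ℚ) = ((c v).den : ℚ) * c v from (Rat.den_mul_eq_num (c v)).symm]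
    ring
  have hcast : ratCastL ((d : ℤ) • x) = (d : ℚ) • ratCast x := by
    funext i
    simp [ratCastL, ratCast]
  have hsum2 : ratCastL ((d : ℤ) • x) = ∑ v ∈ c.support, (z v) • v := by
    rw [hcast, ← hsum, Finsupp.sum, Finset.smul_sum]
    refine Finset.sum_congr rfl fun v hv => ?_
    rw [smul_smul, ← hzz v hv, Int.cast_smul_eq_zsmul]
  have key : ratCastL ((d : ℤ) • x) ∈ Submodule.span ℤ (ratCast '' S) := by
    rw [hsum2]
    exact Submodule.sum_smul_mem _ z fun v hv => Submodule.subset_span (hsupp hv)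
  have hmap : ratCastL ((d : ℤ) • x) ∈ Submodule.map (ratCastL (n := n)) (Submodule.span ℤ S) := by
    rw [Submodule.map_span]
    exact key
  obtain ⟨y, hy, hyx⟩ := hmap
  have : y = (d : ℤ) • x := ratCast_injective hyx
  rw [this] at hy
  rw [← Submodule.span_int_eq_addSubgroupClosure]
  exact hy

end CrossingAux

theorem crossing_is_coroot
    (n : ℕ) (R : Set (Fin n → ℤ))
    (hR : Unimodular R)
    (hfull : Submodule.span ℝ (intCast '' R) = ⊤)
    (ξ : (Fin n → ℤ) →+ ℤ)
    (hsurj : Function.Surjective ξ)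
    (hker : ∃ B ⊆ R, Submodule.span ℝ (intCast '' B) =
      Submodule.span ℝ (intCast '' {m : Fin n → ℤ | ξ m = 0})) :
    ∀ r ∈ R, |ξ r| ≤ 1 := by
  classical
  obtain ⟨B, hBR, hBspan⟩ := hker
  intro r hr
  by_cases hk0 : ξ r = 0
  · simp [hk0]
  -- the real-linear extension of ξ
  set c : Fin n → ℚ := fun i => (ξ (Pi.single i 1) : ℚ) with hc
  set Ξ : (Fin n → ℝ) →ₗ[ℝ] ℝ := CrossingAux.coeffR c with hΞ
  have hΞcast : ∀ m : Fin n → ℤ, Ξ (intCast m) = (ξ m : ℝ) := by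
    intro m
    rw [hΞ, CrossingAux.coeffR_intCast, CrossingAux.addHom_apply ξ m]
    push_cast
    rfl
  set K := Submodule.span ℝ (intCast '' {m : Fin n → ℤ | ξ m = 0}) with hK
  have hKker : K ≤ LinearMap.ker Ξ := by
    rw [hK, Submodule.span_le]
    rintro _ ⟨m, hm, rfl⟩
    simp only [SetLike.mem_coe, LinearMap.mem_ker]
    rw [hΞcast]
    have hm' : ξ m = 0 := hm
    exact_mod_cast hm'
  have hBzero : ∀ b ∈ B, ξ b = 0 := by
    intro b hb
    have h1 : intCast b ∈ K := by
      rw [← hBspan]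
      exact Submodule.subset_span ⟨b, hb, rfl⟩
    have := hKker h1
    rw [LinearMap.mem_ker, hΞcast] at this
    exact_mod_cast this
  obtain ⟨x, hx1⟩ := hsurj 1
  -- the kernel hyperplane of Ξ is contained in K
  have htop : (⊤ : Submodule ℝ (Fin n → ℝ)) ≤ K ⊔ (ℝ ∙ intCast x) := by
    intro v _
    rw [CrossingAux.pi_decomp v]
    refine Submodule.sum_mem _ fun i _ => Submodule.smul_mem _ _ ?_
    have hdecomp : (Pi.single i (1 : ℝ) : Fin n → ℝ) =
        intCast (Pi.single i 1 - ξ (Pi.single i 1) • x) +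
          ((ξ (Pi.single i 1) : ℝ)) • intCast x := by
      rw [← CrossingAux.intCast_zsmul, ← CrossingAux.intCast_add, sub_add_cancel,
        CrossingAux.intCast_single]
    rw [hdecomp]
    refine add_mem (Submodule.mem_sup_left ?_) (Submodule.mem_sup_right ?_)
    · refine Submodule.subset_span ⟨_, ?_, rfl⟩
      simp only [Set.mem_setOf_eq, map_sub, AddMonoidHom.map_zsmul, hx1, smul_eq_mul, mul_one,
        sub_self]
    · exact Submodule.smul_mem _ _ (Submodule.mem_span_singleton_self _)
  have hΞx : Ξ (intCast x) = 1 := by rw [hΞcast, hx1]; norm_num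
  have hKtop : ∀ v : Fin n → ℝ, Ξ v = 0 → v ∈ K := by
    intro v hv
    have hmem : v ∈ K ⊔ (ℝ ∙ intCast x) := htop trivial
    rw [Submodule.mem_sup] at hmem
    obtain ⟨s, hs, w, hw, rfl⟩ := hmem
    rw [Submodule.mem_span_singleton] at hw
    obtain ⟨a, rfl⟩ := hw
    have hΞs : Ξ s = 0 := hKker hs
    rw [map_add, hΞs, zero_add, map_smul, hΞx, smul_eq_mul, mul_one] at hv
    rw [hv]
    simpa using hs
  -- intCast x lies in the real span of B ∪ {r}
  set V := Submodule.span ℝ (intCast '' (B ∪ {r})) with hV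
  have hKV : K ≤ V := by
    rw [← hBspan, hV]
    exact Submodule.span_mono (Set.image_mono Set.subset_union_left)
  have hrV : intCast r ∈ V := Submodule.subset_span ⟨r, Or.inr rfl, rfl⟩
  have hkR : ((ξ r : ℤ) : ℝ) ≠ 0 := Int.cast_ne_zero.mpr hk0
  have hw0 : Ξ (intCast x - ((ξ r : ℤ) : ℝ)⁻¹ • intCast r) = 0 := by
    rw [map_sub, map_smul, hΞx, hΞcast, smul_eq_mul, inv_mul_cancel₀ hkR, sub_self]
  have hxV : intCast x ∈ V := by
    have : intCast x =
        (intCast x - ((ξ r : ℤ) : ℝ)⁻¹ • intCast r) + ((ξ r : ℤ) : ℝ)⁻¹ • intCast r := by ring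
    rw [this]
    exact add_mem (hKV (hKtop _ hw0)) (Submodule.smul_mem _ _ hrV)
  -- clear denominators and use purity
  have hq := CrossingAux.mem_ratSpan (B ∪ {r}) x hxV
  obtain ⟨m, hmpos, hmem⟩ := CrossingAux.exists_pos_smul_mem (B ∪ {r}) x hq
  have hsub : B ∪ {r} ⊆ R := Set.union_subset hBR (Set.singleton_subset_iff.mpr hr)
  have htf := hR (B ∪ {r}) hsub
  set H := AddSubgroup.closure (B ∪ {r}) with hH
  have hxH : x ∈ H := by
    by_contra hxH
    have hq0 : ((x : (Fin n → ℤ) ⧸ H)) ≠ 0 := by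
      rw [Ne, QuotientAddGroup.eq_zero_iff]
      exact hxH
    refine htf _ hq0 ?_
    rw [isOfFinAddOrder_iff_nsmul_eq_zero]
    refine ⟨m, hmpos, ?_⟩
    have : (((m : ℤ) • x : Fin n → ℤ) : (Fin n → ℤ) ⧸ H) = 0 :=
      (QuotientAddGroup.eq_zero_iff _).mpr hmem
    rw [← this]
    rw [← natCast_zsmul]
    rfl
  rw [hH, AddSubgroup.closure_union, AddSubgroup.mem_sup] at hxH
  obtain ⟨b, hb, w, hw, hbw⟩ := hxH
  rw [AddSubgroup.mem_closure_singleton] at hw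
  obtain ⟨t, rfl⟩ := hw
  have hbker : ξ b = 0 := by
    have hle : AddSubgroup.closure B ≤ ξ.ker :=
      (AddSubgroup.closure_le _).mpr fun y hy => by
        simp only [SetLike.mem_coe, AddMonoidHom.mem_ker]
        exact hBzero y hy
    exact AddMonoidHom.mem_ker.mp (hle hb)
  have h1 : t * ξ r = 1 := by
    have := congrArg ξ hbw
    rw [map_add, hbker, zero_add, AddMonoidHom.map_zsmul, smul_eq_mul, hx1] at this
    exact this
  have : IsUnit (ξ r) := IsUnit.of_mul_eq_one _ (by rw [mul_comm]; exact h1)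
  rcases Int.isUnit_iff.mp this with h | h <;> rw [h] <;> norm_num
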